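/- Euler gem formula: if a finite simple graph G is a q-sphere, then its Euler characteristic satisfies χ(G) = 1 + (−1)^q. -/

import Mathlib

universe u

/-- The unit sphere of a vertex: the subgraph induced on the neighbors of `v`. -/
def SimpleGraph.unitSphere {V : Type u} (G : SimpleGraph V) (v : V) :
    SimpleGraph {u : V // G.Adj v u} :=
  SimpleGraph.induce {u : V | G.Adj v u} G

/-- The graph obtained by deleting the vertex `v`. -/
def SimpleGraph.deleteVert {V : Type u} (G : SimpleGraph V) (v : V) :
    SimpleGraph {u : V // u ≠ v} :=
  SimpleGraph.induce {u : V | u ≠ v} G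

/-- Inductive notion of contractibility for graphs: the one-vertex graph is
contractible, and `G` is contractible if for some vertex `v` both the unit sphere
`S(v)` and the deletion `G ∖ v` are contractible. -/
inductive GraphContractible : ∀ {V : Type u}, SimpleGraph V → Prop
  | single {V : Type u} (G : SimpleGraph V) (h1 : Nonempty V) (h2 : Subsingleton V) :
      GraphContractible G
  | step {V : Type u} (G : SimpleGraph V) (v : V)
      (hS : GraphContractible (G.unitSphere v))
      (hD : GraphContractible (G.deleteVert v)) : GraphContractible G

/-- Inductive notion of a `q`-sphere: the empty graph is the `(-1)`-sphere, and for
`q ≥ 0` a graph is a `q`-sphere if every unit sphere is a `(q-1)`-sphere and deleting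
some vertex leaves a contractible graph. -/
inductive GraphSphere : ℤ → ∀ {V : Type u}, SimpleGraph V → Prop
  | empty {V : Type u} (G : SimpleGraph V) (h : IsEmpty V) : GraphSphere (-1) G
  | succ {V : Type u} (G : SimpleGraph V) (q : ℤ) (hq : 0 ≤ q)
      (hS : ∀ v : V, GraphSphere (q - 1) (G.unitSphere v))
      (hv : ∃ v : V, GraphContractible (G.deleteVert v)) : GraphSphere q G

/-- A graph is a `q`-manifold if every unit sphere is a `(q-1)`-sphere. -/
def IsGraphManifold (q : ℤ) {V : Type u} (G : SimpleGraph V) : Prop :=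
  ∀ v : V, GraphSphere (q - 1) (G.unitSphere v)

/-- The join of two graphs: keep all edges and connect every vertex of `G` to every
vertex of `H`. -/
def graphJoin {V W : Type u} (G : SimpleGraph V) (H : SimpleGraph W) :
    SimpleGraph (V ⊕ W) where
  Adj x y := match x, y with
    | Sum.inl a, Sum.inl b => G.Adj a b
    | Sum.inr a, Sum.inr b => H.Adj a b
    | Sum.inl _, Sum.inr _ => True
    | Sum.inr _, Sum.inl _ => True
  symm := by constructor; rintro (a | a) (b | b) h <;> simp_all [SimpleGraph.adj_comm]
  loopless := by constructor; rintro (a | a) h <;> exact SimpleGraph.irrefl _ h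

open Classical in
/-- `f_k(G)`: the number of cliques of `G` with exactly `k+1` vertices. -/
noncomputable def graphFVec {V : Type u} [Fintype V] (G : SimpleGraph V) (k : ℕ) : ℕ :=
  (Finset.univ.filter fun x : Finset V => x.card = k + 1 ∧ G.IsClique (↑x : Set V)).card

/-- The Euler characteristic `χ(G) = Σ_k (-1)^k f_k(G)`. -/
noncomputable def graphEulerChar {V : Type u} [Fintype V] (G : SimpleGraph V) : ℤ :=
  ∑ k ∈ Finset.range (Fintype.card V + 1), (-1 : ℤ) ^ k * graphFVec G k

open Classical in
/-- The curvature of a vertex: `K(v) = Σ_{x ∋ v} (-1)^(|x|-1)/|x|`, summing over the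
cliques of `G` containing `v`. -/
noncomputable def graphCurvature {V : Type u} [Fintype V] (G : SimpleGraph V) (v : V) : ℚ :=
  ∑ x ∈ Finset.univ.filter
      (fun x : Finset V => x.Nonempty ∧ G.IsClique (↑x : Set V) ∧ v ∈ x),
    (-1 : ℚ) ^ (x.card - 1) / (x.card : ℚ)


open Classical in
noncomputable def eSum {V : Type u} [Fintype V] (G : SimpleGraph V) : ℤ :=
  ∑ x ∈ Finset.univ.filter (fun x : Finset V => x.Nonempty ∧ G.IsClique (↑x : Set V)),
    (-1 : ℤ) ^ (x.card - 1)

open Classical in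
noncomputable def cliqueSum {V : Type u} [Fintype V] (G : SimpleGraph V) (p : V → Prop) : ℤ :=
  ∑ x ∈ Finset.univ.filter (fun x : Finset V =>
      x.Nonempty ∧ G.IsClique (↑x : Set V) ∧ ∀ a ∈ x, p a),
    (-1 : ℤ) ^ (x.card - 1)

open Classical in
lemma eSum_subtype {V : Type u} [Fintype V] (G : SimpleGraph V) (p : V → Prop)
    (inst : Fintype {u : V // p u}) (H : SimpleGraph {u : V // p u})
    (hH : ∀ a b : {u : V // p u}, H.Adj a b ↔ G.Adj ↑a ↑b) :
    @eSum _ inst H = cliqueSum G p := by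
  unfold eSum cliqueSum
  apply Finset.sum_bij' (i := fun (y : Finset {u : V // p u}) _ =>
      y.map (Function.Embedding.subtype p))
    (j := fun (x : Finset V) _ => x.subtype p)
  · intro y hy
    simp only [Finset.mem_filter, Finset.mem_univ, true_and] at hy ⊢
    obtain ⟨hne, hcl⟩ := hy
    refine ⟨Finset.Nonempty.map hne, ?_, ?_⟩
    · intro a ha b hb hab
      simp only [Finset.coe_map, Set.mem_image, Finset.mem_coe,
        Function.Embedding.coe_subtype] at ha hb
      obtain ⟨a', ha', rfl⟩ := ha
      obtain ⟨b', hb', rfl⟩ := hb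
      have hne' : a' ≠ b' := fun e => hab (by rw [e])
      exact (hH a' b').1 (hcl ha' hb' hne')
    · intro a ha
      simp only [Finset.mem_map, Function.Embedding.coe_subtype] at ha
      obtain ⟨⟨a', pa⟩, _, rfl⟩ := ha
      exact pa
  · intro x hx
    simp only [Finset.mem_filter, Finset.mem_univ, true_and] at hx ⊢
    obtain ⟨hne, hcl, hp⟩ := hx
    constructor
    · obtain ⟨a, ha⟩ := hne
      exact ⟨⟨a, hp a ha⟩, Finset.mem_subtype.2 ha⟩
    · intro a ha b hb hab
      have ha' : (a : V) ∈ x := Finset.mem_subtype.1 ha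
      have hb' : (b : V) ∈ x := Finset.mem_subtype.1 hb
      have : (a : V) ≠ (b : V) := fun e => hab (Subtype.ext e)
      exact (hH a b).2 (hcl ha' hb' this)
  · intro y hy
    ext a
    rw [Finset.mem_subtype]
    exact Finset.mem_map' _
  · intro x hx
    simp only [Finset.mem_filter, Finset.mem_univ, true_and] at hx
    ext a
    simp only [Finset.mem_map, Finset.mem_subtype, Function.Embedding.coe_subtype]
    constructor
    · rintro ⟨b, hb, rfl⟩; exact hb
    · intro ha; exact ⟨⟨a, hx.2.2 a ha⟩, ha, rfl⟩
  · intro y hy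
    rw [Finset.card_map]

open Classical in
lemma char_eq_eSum {V : Type u} (inst : Fintype V) (G : SimpleGraph V) :
    @graphEulerChar V inst G = @eSum V inst G := by
  classical
  unfold graphEulerChar graphFVec eSum
  rw [← Finset.sum_fiberwise_of_maps_to (g := fun x : Finset V => x.card - 1)
    (t := Finset.range (Fintype.card V + 1))
    (fun x hx => by
      simp only [Finset.mem_range]
      have := Finset.card_le_univ x
      omega)]
  refine Finset.sum_congr rfl fun k hk => ?_
  have hfe : ((Finset.univ.filter fun x : Finset V =>
        x.Nonempty ∧ G.IsClique (↑x : Set V)).filter (fun x => x.card - 1 = k))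
      = Finset.univ.filter fun x : Finset V =>
        x.card = k + 1 ∧ G.IsClique (↑x : Set V) := by
    ext x
    simp only [Finset.mem_filter, Finset.mem_univ, true_and]
    constructor
    · rintro ⟨⟨h0, hc⟩, hk1⟩
      have := Finset.card_pos.mpr h0
      exact ⟨by omega, hc⟩
    · rintro ⟨h1, hc⟩
      have h0 : 0 < x.card := by omega
      exact ⟨⟨Finset.card_pos.mp h0, hc⟩, by omega⟩
  rw [hfe]
  have hterm : ∑ x ∈ Finset.univ.filter
        (fun x : Finset V => x.card = k + 1 ∧ G.IsClique (↑x : Set V)), (-1 : ℤ) ^ (x.card - 1)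
      = ∑ x ∈ Finset.univ.filter
        (fun x : Finset V => x.card = k + 1 ∧ G.IsClique (↑x : Set V)), (-1 : ℤ) ^ k := by
    refine Finset.sum_congr rfl fun x hx => ?_
    simp only [Finset.mem_filter] at hx
    rw [show x.card - 1 = k by omega]
  rw [hterm, Finset.sum_const, nsmul_eq_mul, mul_comm]

open Classical in
lemma eSum_split {V : Type u} [Fintype V] (G : SimpleGraph V) (v : V)
    (i1 : Fintype {u : V // u ≠ v}) (i2 : Fintype {u : V // G.Adj v u}) :
    eSum G = @eSum _ i1 (G.deleteVert v) + 1 - @eSum _ i2 (G.unitSphere v) := by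
  classical
  set S := Finset.univ.filter (fun x : Finset V => x.Nonempty ∧ G.IsClique (↑x : Set V)) with hs
  have h0 : eSum G = (∑ x ∈ S.filter (fun x => v ∈ x), (-1 : ℤ) ^ (x.card - 1))
      + ∑ x ∈ S.filter (fun x => ¬ v ∈ x), (-1 : ℤ) ^ (x.card - 1) :=
    (Finset.sum_filter_add_sum_filter_not S _ _).symm
  have hDel : @eSum _ i1 (G.deleteVert v) = cliqueSum G (fun u => u ≠ v) :=
    eSum_subtype G (fun u => u ≠ v) i1 (G.deleteVert v) (fun a b => Iff.rfl)
  have hSph : @eSum _ i2 (G.unitSphere v) = cliqueSum G (fun u => G.Adj v u) :=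
    eSum_subtype G (fun u => G.Adj v u) i2 (G.unitSphere v) (fun a b => Iff.rfl)
  have hD : (∑ x ∈ S.filter (fun x => ¬ v ∈ x), (-1 : ℤ) ^ (x.card - 1))
      = cliqueSum G (fun u => u ≠ v) := by
    unfold cliqueSum
    apply Finset.sum_congr _ (fun _ _ => rfl)
    ext x
    simp only [hs, Finset.mem_filter, Finset.mem_univ, true_and]
    constructor
    · rintro ⟨⟨hne, hc⟩, hv⟩
      exact ⟨hne, hc, fun a ha e => hv (e ▸ ha)⟩
    · rintro ⟨hne, hc, hall⟩
      exact ⟨⟨hne, hc⟩, fun hv => hall v hv rfl⟩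
  have hS : (∑ x ∈ S.filter (fun x => v ∈ x), (-1 : ℤ) ^ (x.card - 1))
      = 1 - cliqueSum G (fun u => G.Adj v u) := by
    set T := Finset.univ.filter (fun y : Finset V =>
        G.IsClique (↑y : Set V) ∧ ∀ a ∈ y, G.Adj v a) with ht
    have hbij : (∑ x ∈ S.filter (fun x => v ∈ x), (-1 : ℤ) ^ (x.card - 1))
        = ∑ y ∈ T, (-1 : ℤ) ^ y.card := by
      apply Finset.sum_bij' (i := fun (x : Finset V) _ => x.erase v)
        (j := fun (y : Finset V) _ => insert v y)
      · intro x hx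
        rw [hs] at hx
        simp only [Finset.mem_filter, Finset.mem_univ, true_and] at hx
        obtain ⟨⟨hne, hc⟩, hv⟩ := hx
        rw [ht]
        simp only [Finset.mem_filter, Finset.mem_univ, true_and]
        constructor
        · exact hc.subset (by exact_mod_cast Finset.erase_subset v x)
        · intro a ha
          have ha' := Finset.mem_of_mem_erase ha
          have hav := Finset.ne_of_mem_erase ha
          exact hc hv ha' (Ne.symm hav)
      · intro y hy
        rw [ht] at hy
        simp only [Finset.mem_filter, Finset.mem_univ, true_and] at hy
        rw [hs]
        simp only [Finset.mem_filter, Finset.mem_univ, true_and]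
        refine ⟨⟨Finset.insert_nonempty v y, ?_⟩, Finset.mem_insert_self v y⟩
        intro a ha b hb hab
        simp only [Finset.coe_insert, Set.mem_insert_iff, Finset.mem_coe] at ha hb
        rcases ha with rfl | ha
        · rcases hb with rfl | hb
          · exact absurd rfl hab
          · exact hy.2 b hb
        · rcases hb with rfl | hb
          · exact (hy.2 a ha).symm
          · exact hy.1 ha hb hab
      · intro x hx
        rw [hs] at hx
        simp only [Finset.mem_filter] at hx
        exact Finset.insert_erase hx.2
      · intro y hy
        rw [ht] at hy
        simp only [Finset.mem_filter, Finset.mem_univ, true_and] at hy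
        have hvy : v ∉ y := fun hvy => G.loopless.irrefl v (hy.2 v hvy)
        exact Finset.erase_insert hvy
      · intro x hx
        rw [hs] at hx
        simp only [Finset.mem_filter] at hx
        rw [Finset.card_erase_of_mem hx.2]
    rw [hbij]
    rw [← Finset.sum_filter_add_sum_filter_not T (fun y => y.Nonempty)]
    have hempty : (T.filter fun y => ¬ y.Nonempty) = {∅} := by
      ext y
      rw [ht]
      simp only [Finset.mem_filter, Finset.mem_univ, true_and,
        Finset.not_nonempty_iff_eq_empty, Finset.mem_singleton]
      constructor
      · rintro ⟨-, h⟩; exact h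
      · rintro rfl
        exact ⟨⟨by simp, by simp⟩, rfl⟩
    have hne : (∑ y ∈ T.filter (fun y => y.Nonempty), (-1 : ℤ) ^ y.card)
        = - cliqueSum G (fun u => G.Adj v u) := by
      unfold cliqueSum
      rw [← Finset.sum_neg_distrib]
      apply Finset.sum_congr
      · ext y
        rw [ht]
        simp only [Finset.mem_filter, Finset.mem_univ, true_and]
        tauto
      · intro y hy
        simp only [Finset.mem_filter, Finset.mem_univ, true_and] at hy
        have hcp := Finset.card_pos.mpr hy.1
        conv_lhs => rw [show y.card = (y.card - 1) + 1 from by omega, pow_succ]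
        ring
    rw [hempty, hne, Finset.sum_singleton]
    simp only [Finset.card_empty, pow_zero]
    ring
  rw [h0, hD, hS, hDel, hSph]
  ring


lemma contractible_char {V : Type u} {G : SimpleGraph V} (h : GraphContractible G) :
    ∀ (inst : Fintype V), @graphEulerChar V inst G = 1 := by
  induction h with
  | @single W G h1 h2 =>
    intro inst
    haveI := inst
    obtain ⟨w⟩ := h1
    have hsum : @eSum W inst G
        = ∑ x ∈ ({({w} : Finset W)} : Finset (Finset W)), (-1 : ℤ) ^ (x.card - 1) := by
      unfold eSum
      apply Finset.sum_congr _ (fun _ _ => rfl)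
      ext x
      simp only [Finset.mem_filter, Finset.mem_univ, true_and, Finset.mem_singleton]
      constructor
      · rintro ⟨⟨a, ha⟩, -⟩
        ext b
        simp only [Finset.mem_singleton]
        constructor
        · intro _; exact Subsingleton.elim b w
        · intro hb
          subst hb
          exact Subsingleton.elim a b ▸ ha
      · rintro rfl
        refine ⟨⟨w, Finset.mem_singleton_self w⟩, ?_⟩
        simp [SimpleGraph.isClique_iff, Set.pairwise_singleton]
    rw [char_eq_eSum, hsum, Finset.sum_singleton]
    simp
  | @step W G v hSc hDc ihS ihD =>
    intro inst
    haveI := inst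
    haveI i1 : Fintype {u : W // u ≠ v} := Fintype.ofFinite _
    haveI i2 : Fintype {u : W // G.Adj v u} := Fintype.ofFinite _
    have e1 : @eSum _ i1 (G.deleteVert v) = 1 :=
      (char_eq_eSum i1 _).symm.trans (ihD i1)
    have e2 : @eSum _ i2 (G.unitSphere v) = 1 :=
      (char_eq_eSum i2 _).symm.trans (ihS i2)
    rw [char_eq_eSum inst G, @eSum_split W inst G v i1 i2, e1, e2]
    ring

lemma sphere_char {q : ℤ} {V : Type u} {G : SimpleGraph V} (h : GraphSphere q G) :
    ∀ (inst : Fintype V), @graphEulerChar V inst G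
      = if q = -1 then 0 else 1 + (-1 : ℤ) ^ q.toNat := by
  induction h with
  | @empty W G hE =>
    intro inst
    haveI := inst
    rw [char_eq_eSum, if_pos rfl]
    unfold eSum
    apply Finset.sum_eq_zero
    intro x hx
    simp only [Finset.mem_filter] at hx
    obtain ⟨a, -⟩ := hx.2.1
    exact (hE.false a).elim
  | @succ W G q hq hS hv ih =>
    intro inst
    haveI := inst
    obtain ⟨v, hc⟩ := hv
    haveI i1 : Fintype {u : W // u ≠ v} := Fintype.ofFinite _
    haveI i2 : Fintype {u : W // G.Adj v u} := Fintype.ofFinite _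
    have e1 : @eSum _ i1 (G.deleteVert v) = 1 :=
      (char_eq_eSum i1 _).symm.trans (contractible_char hc i1)
    have e2 := (char_eq_eSum i2 (G.unitSphere v)).symm.trans (ih v i2)
    rw [char_eq_eSum inst G, @eSum_split W inst G v i1 i2, e1, e2]
    rcases eq_or_lt_of_le hq with h0 | hpos
    · rw [← h0]
      norm_num
    · have hne1 : q - 1 ≠ -1 := by omega
      have hne2 : q ≠ -1 := by omega
      rw [if_neg hne1, if_neg hne2]
      have htn : q.toNat = (q - 1).toNat + 1 := by omega
      rw [htn, pow_succ]
      ring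

/-- Euler gem formula: a `q`-sphere has Euler characteristic `1 + (-1)^q`. -/
theorem euler_gem {V : Type} [Fintype V] (G : SimpleGraph V) (q : ℕ)
    (hG : GraphSphere (q : ℤ) G) :
    graphEulerChar G = 1 + (-1 : ℤ) ^ q := by
  have h := sphere_char hG inferInstance
  rw [h, if_neg (by omega : (q : ℤ) ≠ -1)]
  simp
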